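/- Let ψ = (|00⟩ + |1+⟩)/√2 and ψ⊥ = (|01⟩ + |1-⟩)/√2 in ℂ²⊗ℂ², where |±⟩ = (|0⟩ ± |1⟩)/√2. Then ⟨ψ|ψ⊥⟩ = 0, and there exists no pair of POVMs {E_x} on the first qubit and {F_y} on the second qubit such that for all x, y: ⟨ψ|E_x ⊗ F_y|ψ⟩ · ⟨ψ⊥|E_x ⊗ F_y|ψ⊥⟩ = 0. -/

import Mathlib

open Matrix Kronecker ComplexOrder ComplexConjugate

namespace LMaux

/-- 2D "cross product". -/
def cross (u v : Fin 2 → ℂ) : ℂ := u 0 * v 1 - u 1 * v 0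

/-- Bilinear form given by a 2×2 matrix. -/
def sig (g : Matrix (Fin 2) (Fin 2) ℂ) (P Q : Fin 2 → ℂ) : ℂ :=
  P 0 * Q 0 * g 0 0 + P 0 * Q 1 * g 0 1 + P 1 * Q 0 * g 1 0 + P 1 * Q 1 * g 1 1

lemma cross_ne_left {p q : Fin 2 → ℂ} (h : cross p q ≠ 0) : p ≠ 0 := by
  rintro rfl; apply h; simp [cross]

lemma cross_ne_right {p q : Fin 2 → ℂ} (h : cross p q ≠ 0) : q ≠ 0 := by
  rintro rfl; apply h; simp [cross]

lemma same_line {p q a : Fin 2 → ℂ} (h1 : cross p a = 0) (h2 : cross q a = 0)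
    (hpq : cross p q ≠ 0) : a = 0 := by
  funext i
  fin_cases i
  · have h0 : a 0 * cross p q = 0 := by unfold cross at *; linear_combination q 0 * h1 - p 0 * h2
    simpa using (mul_eq_zero.mp h0).resolve_right hpq
  · have h0 : a 1 * cross p q = 0 := by unfold cross at *; linear_combination q 1 * h1 - p 1 * h2
    simpa using (mul_eq_zero.mp h0).resolve_right hpq

lemma same_line2 {p a b : Fin 2 → ℂ} (h1 : cross p a = 0) (h2 : cross p b = 0)
    (hp : p ≠ 0) : cross a b = 0 := by
  have h1' : cross a p = 0 := by unfold cross at *; linear_combination -h1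
  have h2' : cross b p = 0 := by unfold cross at *; linear_combination -h2
  by_contra hab
  exact hp (same_line h1' h2' hab)

lemma four_sq {z1 z2 z3 z4 : ℂ}
    (h : conj z1 * z1 + conj z2 * z2 + conj z3 * z3 + conj z4 * z4 = 0) :
    z1 = 0 ∧ z2 = 0 ∧ z3 = 0 ∧ z4 = 0 := by
  simp only [← Complex.normSq_eq_conj_mul_self] at h
  have h' : Complex.normSq z1 + Complex.normSq z2 + Complex.normSq z3
      + Complex.normSq z4 = 0 := by exact_mod_cast h
  have n1 := Complex.normSq_nonneg z1
  have n2 := Complex.normSq_nonneg z2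
  have n3 := Complex.normSq_nonneg z3
  have n4 := Complex.normSq_nonneg z4
  refine ⟨?_, ?_, ?_, ?_⟩ <;> rw [← Complex.normSq_eq_zero] <;> linarith

lemma span_two {ι' : Type*} [Fintype ι'] (u : ι' → Fin 2 → ℂ)
    (h : ∀ i j : Fin 2, ∑ t, conj (u t i) * u t j = (1 : Matrix (Fin 2) (Fin 2) ℂ) i j) :
    ∃ t r, cross (u t) (u r) ≠ 0 := by
  by_contra hc
  push_neg at hc
  have h00 := h 0 0; have h11 := h 1 1; have h01 := h 0 1; have h10 := h 1 0
  simp [Matrix.one_apply] at h00 h11 h01 h10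
  have key : (1 : ℂ) = 0 := by
    calc (1:ℂ) = (∑ t, conj (u t 0) * u t 0) * (∑ r, conj (u r 1) * u r 1) := by
          rw [h00, h11]; ring
    _ = ∑ t, ∑ r, (conj (u t 0) * u t 0) * (conj (u r 1) * u r 1) := by
          rw [Finset.sum_mul_sum]
    _ = ∑ t, ∑ r, (conj (u t 0) * u t 1) * (conj (u r 1) * u r 0) := by
          refine Finset.sum_congr rfl fun t _ => Finset.sum_congr rfl fun r _ => ?_
          have hcr := hc t r
          unfold cross at hcr
          linear_combination (conj (u t 0) * conj (u r 1)) * hcr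
    _ = (∑ t, conj (u t 0) * u t 1) * (∑ r, conj (u r 1) * u r 0) := by
          rw [Finset.sum_mul_sum]
    _ = 0 := by rw [h01, h10]; ring
  exact one_ne_zero key

set_option maxHeartbeats 1000000 in
lemma expand (g : Matrix (Fin 2) (Fin 2) ℂ) (hg : ∀ i j, conj (g i j) = g i j)
    (E F : Matrix (Fin 2) (Fin 2) ℂ) (P V W Z : Fin 2 → ℂ)
    (hE : ∀ i k, E i k = conj (P i) * P k + conj (V i) * V k)
    (hF : ∀ j l, F j l = conj (W j) * W l + conj (Z j) * Z l) :
    star (fun p : Fin 2 × Fin 2 => g p.1 p.2) ⬝ᵥ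
      (E ⊗ₖ F).mulVec (fun p : Fin 2 × Fin 2 => g p.1 p.2)
    = conj (sig g P W) * sig g P W + conj (sig g P Z) * sig g P Z
      + conj (sig g V W) * sig g V W + conj (sig g V Z) * sig g V Z := by
  have hg00 := hg 0 0; have hg01 := hg 0 1; have hg10 := hg 1 0; have hg11 := hg 1 1
  simp only [dotProduct, mulVec, Fintype.sum_prod_type, Fin.sum_univ_two,
    kroneckerMap_apply, Pi.star_apply, RCLike.star_def, hE, hF, sig,
    _root_.map_add, _root_.map_mul, hg00, hg01, hg10, hg11]
  ring

set_option maxHeartbeats 2000000 in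
lemma FIN (c : ℂ) (hc : c ≠ 0) (P₁ P₂ Q₁ Q₂ : Fin 2 → ℂ)
    (hP : cross P₁ P₂ ≠ 0) (hQ : cross Q₁ Q₂ ≠ 0)
    (h11 : sig !![c, 0; 1/2, 1/2] P₁ Q₁ = 0 ∨ sig !![0, c; 1/2, -(1/2)] P₁ Q₁ = 0)
    (h21 : sig !![c, 0; 1/2, 1/2] P₂ Q₁ = 0 ∨ sig !![0, c; 1/2, -(1/2)] P₂ Q₁ = 0)
    (h12 : sig !![c, 0; 1/2, 1/2] P₁ Q₂ = 0 ∨ sig !![0, c; 1/2, -(1/2)] P₁ Q₂ = 0)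
    (h22 : sig !![c, 0; 1/2, 1/2] P₂ Q₂ = 0 ∨ sig !![0, c; 1/2, -(1/2)] P₂ Q₂ = 0) :
    False := by
  set a1 : Fin 2 → ℂ := ![-(Q₁ 0 + Q₁ 1)/2, c * Q₁ 0] with ha1def
  set b1 : Fin 2 → ℂ := ![-(Q₁ 0 - Q₁ 1)/2, c * Q₁ 1] with hb1def
  set a2 : Fin 2 → ℂ := ![-(Q₂ 0 + Q₂ 1)/2, c * Q₂ 0] with ha2def
  set b2 : Fin 2 → ℂ := ![-(Q₂ 0 - Q₂ 1)/2, c * Q₂ 1] with hb2def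
  have convM : ∀ P Q : Fin 2 → ℂ,
      sig !![c, 0; 1/2, 1/2] P Q = cross P ![-(Q 0 + Q 1)/2, c * Q 0] := by
    intro P Q; simp [sig, cross]; ring
  have convN : ∀ P Q : Fin 2 → ℂ,
      sig !![0, c; 1/2, -(1/2)] P Q = cross P ![-(Q 0 - Q 1)/2, c * Q 1] := by
    intro P Q; simp [sig, cross]; ring
  rw [convM P₁ Q₁, convN P₁ Q₁, ← ha1def, ← hb1def] at h11
  rw [convM P₂ Q₁, convN P₂ Q₁, ← ha1def, ← hb1def] at h21
  rw [convM P₁ Q₂, convN P₁ Q₂, ← ha2def, ← hb2def] at h12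
  rw [convM P₂ Q₂, convN P₂ Q₂, ← ha2def, ← hb2def] at h22
  have hQ1 : Q₁ ≠ 0 := cross_ne_left hQ
  have hQ2 : Q₂ ≠ 0 := cross_ne_right hQ
  have hvec : ∀ Q : Fin 2 → ℂ, Q ≠ 0 → (![-(Q 0 + Q 1)/2, c * Q 0] : Fin 2 → ℂ) ≠ 0 := by
    intro Q hQ' h0
    apply hQ'
    have e1 : c * Q 0 = 0 := congrFun h0 1
    have e0 : -(Q 0 + Q 1)/2 = 0 := congrFun h0 0
    have hq0 : Q 0 = 0 := by rcases mul_eq_zero.mp e1 with h|h; exact absurd h hc; exact h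
    have hq1 : Q 1 = 0 := by field_simp [hq0] at e0; linear_combination -e0 - hq0
    funext i; fin_cases i <;> simp [hq0, hq1]
  have hvecb : ∀ Q : Fin 2 → ℂ, Q ≠ 0 → (![-(Q 0 - Q 1)/2, c * Q 1] : Fin 2 → ℂ) ≠ 0 := by
    intro Q hQ' h0
    apply hQ'
    have e1 : c * Q 1 = 0 := congrFun h0 1
    have e0 : -(Q 0 - Q 1)/2 = 0 := congrFun h0 0
    have hq1 : Q 1 = 0 := by rcases mul_eq_zero.mp e1 with h|h; exact absurd h hc; exact h
    have hq0 : Q 0 = 0 := by field_simp [hq1] at e0; linear_combination -e0 + hq1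
    funext i; fin_cases i <;> simp [hq0, hq1]
  have ha1 : a1 ≠ 0 := hvec Q₁ hQ1
  have hb1 : b1 ≠ 0 := hvecb Q₁ hQ1
  have ha2 : a2 ≠ 0 := hvec Q₂ hQ2
  have hb2 : b2 ≠ 0 := hvecb Q₂ hQ2
  have haa : cross a1 a2 ≠ 0 := by
    have e : cross a1 a2 = c/2 * cross Q₁ Q₂ := by
      simp [cross, ha1def, ha2def]; ring
    rw [e]
    exact mul_ne_zero (div_ne_zero hc two_ne_zero) hQ
  have hbb : cross b1 b2 ≠ 0 := by
    have e : cross b1 b2 = -(c/2) * cross Q₁ Q₂ := by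
      simp [cross, hb1def, hb2def]; ring
    rw [e]
    exact mul_ne_zero (neg_ne_zero.mpr (div_ne_zero hc two_ne_zero)) hQ
  have hmx : cross a1 b2 = 0 → cross b1 a2 = 0 → False := by
    intro e1 e2
    apply hQ
    have e : c * cross Q₁ Q₂ = 0 := by
      simp only [cross, ha1def, hb1def, ha2def, hb2def, Matrix.cons_val_zero,
        Matrix.cons_val_one, Matrix.head_cons] at e1 e2 ⊢
      linear_combination -e1 - e2
    exact (mul_eq_zero.mp e).resolve_left hc
  rcases h11 with h11|h11 <;> rcases h21 with h21|h21 <;>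
    rcases h12 with h12|h12 <;> rcases h22 with h22|h22 <;>
    first
    | exact ha1 (same_line h11 h21 hP)
    | exact hb1 (same_line h11 h21 hP)
    | exact ha2 (same_line h12 h22 hP)
    | exact hb2 (same_line h12 h22 hP)
    | exact haa (same_line2 h11 h12 (cross_ne_left hP))
    | exact haa (same_line2 h21 h22 (cross_ne_right hP))
    | exact hbb (same_line2 h11 h12 (cross_ne_left hP))
    | exact hbb (same_line2 h21 h22 (cross_ne_right hP))
    | exact hmx (same_line2 h11 h12 (cross_ne_left hP)) (same_line2 h21 h22 (cross_ne_right hP))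
    | exact hmx (same_line2 h21 h22 (cross_ne_right hP)) (same_line2 h11 h12 (cross_ne_left hP))

end LMaux

open LMaux in
/-- `ψ = (|00⟩ + |1+⟩)/√2` and `ψ⊥ = (|01⟩ + |1-⟩)/√2` are orthogonal, and no
pair of local POVMs `{E_x}`, `{F_y}` perfectly distinguishes them, i.e.
satisfies `⟨ψ|E_x⊗F_y|ψ⟩ ⟨ψ⊥|E_x⊗F_y|ψ⊥⟩ = 0` for all `x, y`. -/
theorem LM_cannot_distinguish (ψ ψp : Fin 2 × Fin 2 → ℂ)
    (hψ : ψ = fun p => !![((Real.sqrt 2)⁻¹ : ℂ), 0; 1 / 2, 1 / 2] p.1 p.2)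
    (hψp : ψp = fun p => !![0, ((Real.sqrt 2)⁻¹ : ℂ); 1 / 2, -(1 / 2)] p.1 p.2) :
    star ψ ⬝ᵥ ψp = 0 ∧
    ∀ (ι κ : Type) [Fintype ι] [Fintype κ]
      (E : ι → Matrix (Fin 2) (Fin 2) ℂ) (F : κ → Matrix (Fin 2) (Fin 2) ℂ),
      (∀ x, (E x).PosSemidef) → (∀ y, (F y).PosSemidef) →
      (∑ x, E x) = 1 → (∑ y, F y) = 1 →
      ¬ (∀ x y, (star ψ ⬝ᵥ (E x ⊗ₖ F y).mulVec ψ) *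
          (star ψp ⬝ᵥ (E x ⊗ₖ F y).mulVec ψp) = 0) := by
  subst hψ hψp
  have hcre : ((Real.sqrt 2)⁻¹ : ℂ) = ((Real.sqrt 2)⁻¹ : ℝ) := by push_cast; ring
  have hc : ((Real.sqrt 2)⁻¹ : ℂ) ≠ 0 := by
    rw [hcre]
    exact_mod_cast inv_ne_zero (ne_of_gt (Real.sqrt_pos.mpr (by norm_num)))
  have hconj : conj ((Real.sqrt 2)⁻¹ : ℂ) = ((Real.sqrt 2)⁻¹ : ℂ) := by
    rw [hcre, Complex.conj_ofReal]
  constructor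
  · simp [dotProduct, Fintype.sum_prod_type, Fin.sum_univ_two, Complex.star_def,
      hconj, map_div₀]
  · intro ι κ _ _ E F hE hF hEsum hFsum h
    -- decompose the POVM elements into rank-one pieces (rows of B, C)
    open scoped MatrixOrder in choose B hB using fun x => CStarAlgebra.nonneg_iff_eq_star_mul_self.mp (hE x).nonneg
    open scoped MatrixOrder in choose C hC using fun y => CStarAlgebra.nonneg_iff_eq_star_mul_self.mp (hF y).nonneg
    have hEntry : ∀ x i k, E x i k = conj (B x 0 i) * B x 0 k + conj (B x 1 i) * B x 1 k := by
      intro x i k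
      rw [hB x]
      simp [Matrix.mul_apply, Matrix.star_eq_conjTranspose, Matrix.conjTranspose_apply, Fin.sum_univ_two]
    have hFEntry : ∀ y j l, F y j l = conj (C y 0 j) * C y 0 l + conj (C y 1 j) * C y 1 l := by
      intro y j l
      rw [hC y]
      simp [Matrix.mul_apply, Matrix.star_eq_conjTranspose, Matrix.conjTranspose_apply, Fin.sum_univ_two]
    set u : ι × Fin 2 → Fin 2 → ℂ := fun t => B t.1 t.2 with hu
    set w : κ × Fin 2 → Fin 2 → ℂ := fun t => C t.1 t.2 with hw
    have hone : ∀ i j : Fin 2,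
        ∑ t : ι × Fin 2, conj (u t i) * u t j = (1 : Matrix (Fin 2) (Fin 2) ℂ) i j := by
      intro i j
      rw [Fintype.sum_prod_type]
      calc ∑ x, ∑ k : Fin 2, conj (u (x, k) i) * u (x, k) j = ∑ x, E x i j := by
            refine Finset.sum_congr rfl fun x _ => ?_
            rw [hEntry x i j, Fin.sum_univ_two]
      _ = (1 : Matrix (Fin 2) (Fin 2) ℂ) i j := by
            rw [← hEsum, Matrix.sum_apply]
    have honeF : ∀ i j : Fin 2,
        ∑ t : κ × Fin 2, conj (w t i) * w t j = (1 : Matrix (Fin 2) (Fin 2) ℂ) i j := by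
      intro i j
      rw [Fintype.sum_prod_type]
      calc ∑ y, ∑ k : Fin 2, conj (w (y, k) i) * w (y, k) j = ∑ y, F y i j := by
            refine Finset.sum_congr rfl fun y _ => ?_
            rw [hFEntry y i j, Fin.sum_univ_two]
      _ = (1 : Matrix (Fin 2) (Fin 2) ℂ) i j := by
            rw [← hFsum, Matrix.sum_apply]
    obtain ⟨t1, t2, hP⟩ := span_two u hone
    obtain ⟨r1, r2, hQ⟩ := span_two w honeF
    -- the orthogonality conditions for each pair of extracted vectors
    have hgM : ∀ i j, conj ((!![((Real.sqrt 2)⁻¹ : ℂ), 0; 1 / 2, 1 / 2] :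
        Matrix (Fin 2) (Fin 2) ℂ) i j) = !![((Real.sqrt 2)⁻¹ : ℂ), 0; 1 / 2, 1 / 2] i j := by
      intro i j
      fin_cases i <;> fin_cases j <;> simp [hconj, map_div₀, Complex.conj_ofNat]
    have hgN : ∀ i j, conj ((!![0, ((Real.sqrt 2)⁻¹ : ℂ); 1 / 2, -(1 / 2)] :
        Matrix (Fin 2) (Fin 2) ℂ) i j) = !![0, ((Real.sqrt 2)⁻¹ : ℂ); 1 / 2, -(1 / 2)] i j := by
      intro i j
      fin_cases i <;> fin_cases j <;> simp [hconj, map_div₀, Complex.conj_ofNat]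
    have cond : ∀ (t : ι × Fin 2) (r : κ × Fin 2),
        sig !![((Real.sqrt 2)⁻¹ : ℂ), 0; 1 / 2, 1 / 2] (u t) (w r) = 0 ∨
        sig !![0, ((Real.sqrt 2)⁻¹ : ℂ); 1 / 2, -(1 / 2)] (u t) (w r) = 0 := by
      rintro ⟨x, i⟩ ⟨y, j⟩
      rcases mul_eq_zero.mp (h x y) with h0 | h0
      · left
        rw [expand _ hgM (E x) (F y) (B x 0) (B x 1) (C y 0) (C y 1)
          (hEntry x) (hFEntry y)] at h0
        obtain ⟨e1, e2, e3, e4⟩ := four_sq h0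
        fin_cases i <;> fin_cases j <;> assumption
      · right
        rw [expand _ hgN (E x) (F y) (B x 0) (B x 1) (C y 0) (C y 1)
          (hEntry x) (hFEntry y)] at h0
        obtain ⟨e1, e2, e3, e4⟩ := four_sq h0
        fin_cases i <;> fin_cases j <;> assumption
    exact FIN _ hc (u t1) (u t2) (w r1) (w r2) hP hQ
      (cond t1 r1) (cond t2 r1) (cond t1 r2) (cond t2 r2)
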